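/- arXiv:0904.0924 — 3 statements merged into one kernel-verified Lean document; each statement's English description precedes it below -/
import Mathlib

section
/- Let L be a finite-dimensional Lie algebra over a field F and let B, C be ideals of L. If the quotient Lie algebras L/B and L/C are both A-algebras, then L/(B ∩ C) is an A-algebra. -/
/-- A finite-dimensional Lie algebra is an `A`-algebra if every nilpotent
subalgebra is abelian. -/
def IsAAlgebra (F L : Type*) [Field F] [LieRing L] [LieAlgebra F L] : Prop :=
  ∀ U : LieSubalgebra F L, LieModule.IsNilpotent U U → IsLieAbelian U

/-- The natural Lie algebra morphism between quotients by nested ideals. -/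
def lieQuotMap {F L : Type*} [Field F] [LieRing L] [LieAlgebra F L]
    (I J : LieIdeal F L) (h : I ≤ J) : (L ⧸ I) →ₗ⁅F⁆ (L ⧸ J) :=
  { Submodule.mapQ I.toSubmodule J.toSubmodule LinearMap.id h with
    map_lie' := by
      intro x y
      obtain ⟨a, rfl⟩ := LieSubmodule.Quotient.surjective_mk' I x
      obtain ⟨b, rfl⟩ := LieSubmodule.Quotient.surjective_mk' I y
      rfl }

lemma lieQuotMap_mk {F L : Type*} [Field F] [LieRing L] [LieAlgebra F L]
    (I J : LieIdeal F L) (h : I ≤ J) (a : L) :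
    lieQuotMap I J h (LieSubmodule.Quotient.mk' I a) = LieSubmodule.Quotient.mk' J a :=
  rfl

theorem quotient_inf_isAAlgebra (F L : Type*) [Field F] [LieRing L] [LieAlgebra F L]
    [FiniteDimensional F L] (B C : LieIdeal F L)
    (hB : IsAAlgebra F (L ⧸ B)) (hC : IsAAlgebra F (L ⧸ C)) :
    IsAAlgebra F (L ⧸ (B ⊓ C)) := by
  intro U hU
  constructor
  rintro ⟨x, hx⟩ ⟨y, hy⟩
  have key : ∀ (D : LieIdeal F L) (hD : IsAAlgebra F (L ⧸ D)) (h : B ⊓ C ≤ D),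
      lieQuotMap (B ⊓ C) D h ⁅x, y⁆ = 0 := by
    intro D hD h
    set f := (lieQuotMap (B ⊓ C) D h).comp U.incl with hf
    have hnil : LieModule.IsNilpotent f.range f.range :=
      haveI : LieRing.IsNilpotent U := hU; f.isNilpotent_range
    have hab : IsLieAbelian f.range := hD f.range hnil
    have hxy : ⁅(⟨f ⟨x, hx⟩, LieHom.mem_range_self f ⟨x, hx⟩⟩ : f.range),
        (⟨f ⟨y, hy⟩, LieHom.mem_range_self f ⟨y, hy⟩⟩ : f.range)⁆ = 0 :=
      trivial_lie_zero _ _ _ _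
    have : ⁅f ⟨x, hx⟩, f ⟨y, hy⟩⁆ = 0 := congrArg Subtype.val hxy
    calc lieQuotMap (B ⊓ C) D h ⁅x, y⁆ = ⁅f ⟨x, hx⟩, f ⟨y, hy⟩⁆ := by
          simp [hf, LieHom.comp_apply]
      _ = 0 := this
  obtain ⟨a, ha⟩ := LieSubmodule.Quotient.surjective_mk' (B ⊓ C) x
  obtain ⟨b, hb⟩ := LieSubmodule.Quotient.surjective_mk' (B ⊓ C) y
  have hbr : ⁅x, y⁆ = LieSubmodule.Quotient.mk' (B ⊓ C) ⁅a, b⁆ := by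
    rw [← ha, ← hb]; rfl
  have hBmem : ⁅a, b⁆ ∈ B := by
    have := key B hB inf_le_left
    rw [hbr, lieQuotMap_mk] at this
    exact (LieSubmodule.Quotient.mk_eq_zero B).mp this
  have hCmem : ⁅a, b⁆ ∈ C := by
    have := key C hC inf_le_right
    rw [hbr, lieQuotMap_mk] at this
    exact (LieSubmodule.Quotient.mk_eq_zero C).mp this
  have : ⁅x, y⁆ = 0 := by
    rw [hbr]
    exact (LieSubmodule.Quotient.mk_eq_zero (B ⊓ C)).mpr ⟨hBmem, hCmem⟩
  ext
  simpa using this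
end

section
/- Let L be a finite-dimensional Lie A-algebra over a field F and let I be an ideal of L such that the quotient L/I is nilpotent. Then [L, L] ⊆ I. (Hence the nilpotent residual of L equals [L, L], and by iteration the lower nilpotent series of L coincides with its derived series.) -/
open Module LieAlgebra

private lemma ad_pow_mem_lcs {F L : Type*} [Field F] [LieRing L] [LieAlgebra F L]
    (x : L) (k : ℕ) (y : L) :
    ((ad F L x) ^ k) y ∈ LieModule.lowerCentralSeries F L L k := by
  induction k with
  | zero => simp
  | succ k ih =>
    rw [pow_succ', Module.End.mul_apply, LieModule.lowerCentralSeries_succ]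
    exact LieSubmodule.lie_mem_lie (LieSubmodule.mem_top x) ih

private lemma aux_A_algebra {F : Type u} [Field F] :
    ∀ (n : ℕ) (L : Type v) [LieRing L] [LieAlgebra F L] [FiniteDimensional F L],
    Module.finrank F L ≤ n → IsAAlgebra F L →
    ∀ I : LieIdeal F L, (∃ k, LieModule.lowerCentralSeries F L L k ≤ I) →
    ∀ a b : L, ⁅a, b⁆ ∈ I := by
  intro n
  induction n with
  | zero =>
    intro L _ _ _ hrank _ I _ a b
    have : Subsingleton L :=
      (Module.finrank_zero_iff (R := F) (M := L)).mp (le_antisymm hrank (Nat.zero_le _))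
    rw [Subsingleton.elim (⁅a, b⁆ : L) 0]
    exact I.zero_mem
  | succ n ih =>
    intro L _ _ _ hrank hA I hlcs a b
    by_cases hnil : LieRing.IsNilpotent L
    · -- nilpotent case: L is abelian
      have htop : LieRing.IsNilpotent (⊤ : LieSubalgebra F L) :=
        ((LieSubalgebra.topEquiv (R := F) (L := L)).nilpotent_iff_equiv_nilpotent).mpr hnil
      have hab := hA ⊤ htop
      have h0 : (⁅(⟨a, trivial⟩ : (⊤ : LieSubalgebra F L)),
          (⟨b, trivial⟩ : (⊤ : LieSubalgebra F L))⁆) = 0 := trivial_lie_zero _ _ _ _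
      have h1 : (⁅a, b⁆ : L) = 0 := by
        have h2 := Subtype.ext_iff.mp h0
        simpa only [LieSubalgebra.coe_bracket, ZeroMemClass.coe_zero] using h2
      rw [h1]; exact I.zero_mem
    · obtain ⟨k, hk⟩ := hlcs
      rw [LieAlgebra.isNilpotent_iff_forall (R := F)] at hnil
      push_neg at hnil
      obtain ⟨x, hx⟩ := hnil
      set E : LieSubalgebra F L := LieSubalgebra.engel F x with hE
      have hEne : E ≠ ⊤ := by
        intro h
        apply hx
        refine ((LinearMap.charpoly_nilpotent_tfae (ad F L x)).out 2 0).mp ?_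
        intro y
        have hy : y ∈ E := h ▸ LieSubalgebra.mem_top y
        rwa [hE, LieSubalgebra.mem_engel_iff] at hy
      have hEne' : E.toSubmodule ≠ ⊤ := by
        intro h
        apply hEne
        rw [← LieSubalgebra.toSubmodule_inj]
        simpa using h
      have hErank : finrank F E ≤ n := by
        have hlt : finrank F E < finrank F L :=
          Submodule.finrank_lt hEne'
      -- Fitting decomposition
        omega
      set f := ad F L x with hf
      obtain ⟨N, hN⟩ := Filter.eventually_atTop.mp f.eventually_isCompl_ker_pow_range_pow
      set m := max N k with hm
      have hcompl := hN m (le_max_left _ _)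
      have hsup : LinearMap.ker (f ^ m) ⊔ LinearMap.range (f ^ m) = ⊤ :=
        hcompl.codisjoint.eq_top
      have hker : LinearMap.ker (f ^ m) ≤ E.toSubmodule := by
        intro y hy
        rw [LinearMap.mem_ker] at hy
        exact (LieSubalgebra.mem_engel_iff F x y).mpr ⟨m, hy⟩
      have hrange : LinearMap.range (f ^ m) ≤ I.toSubmodule := by
        rintro _ ⟨y, rfl⟩
        exact hk (LieModule.antitone_lowerCentralSeries F L L (le_max_right N k)
          (ad_pow_mem_lcs x m y))
      have hsupEI : E.toSubmodule ⊔ I.toSubmodule = ⊤ :=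
        top_unique (hsup ▸ sup_le_sup hker hrange)
      -- E is an A-algebra
      have hAE : IsAAlgebra F E := by
        intro U hU
        set g : U →ₗ⁅F⁆ L := E.incl.comp U.incl with hg
        have hginj : Function.Injective g := by
          intro u v huv
          exact Subtype.ext (Subtype.ext_iff.mp (by simpa [hg] using huv))
        haveI : LieRing.IsNilpotent U := hU
        have habR := hA g.range g.isNilpotent_range
        constructor
        intro u v
        refine hginj ?_
        rw [map_zero, LieHom.map_lie]
        have h0 : (⁅g.rangeRestrict u, g.rangeRestrict v⁆ : g.range) = 0 :=
          trivial_lie_zero _ _ _ _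
        have h2 := Subtype.ext_iff.mp h0
        simpa only [LieSubalgebra.coe_bracket, LieHom.rangeRestrict_apply,
          ZeroMemClass.coe_zero] using h2
      -- induction hypothesis for E
      set J : LieIdeal F E := LieIdeal.comap E.incl I with hJ
      have hJk : LieModule.lowerCentralSeries F E E k ≤ J := by
        intro y hy
        rw [LieIdeal.mem_comap]
        exact hk (LieIdeal.map_lowerCentralSeries_le k (LieIdeal.mem_map hy))
      have hEab := ih E hErank hAE J ⟨k, hJk⟩
      -- conclude
      have ha : a ∈ E.toSubmodule ⊔ I.toSubmodule := hsupEI ▸ Submodule.mem_top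
      have hb : b ∈ E.toSubmodule ⊔ I.toSubmodule := hsupEI ▸ Submodule.mem_top
      obtain ⟨e₁, he₁, i₁, hi₁, rfl⟩ := Submodule.mem_sup.mp ha
      obtain ⟨e₂, he₂, i₂, hi₂, rfl⟩ := Submodule.mem_sup.mp hb
      have hee : (⁅e₁, e₂⁆ : L) ∈ I := by
        have := hEab ⟨e₁, he₁⟩ ⟨e₂, he₂⟩
        rw [hJ, LieIdeal.mem_comap] at this
        simpa using this
      rw [add_lie, lie_add, lie_add]
      exact I.add_mem (I.add_mem hee (lie_mem_right F L I e₁ i₂ hi₂))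
        (I.add_mem (lie_mem_left F L I i₁ e₂ hi₁) (lie_mem_right F L I i₁ i₂ hi₂))

theorem derived_le_of_quotient_nilpotent (F L : Type*) [Field F] [LieRing L] [LieAlgebra F L]
    [FiniteDimensional F L] (hA : IsAAlgebra F L) (I : LieIdeal F L)
    (hI : LieModule.IsNilpotent (L ⧸ I) (L ⧸ I)) :
    LieAlgebra.derivedSeries F L 1 ≤ I := by
  have hmod : LieModule.IsNilpotent L (L ⧸ I) := by
    rw [LieModule.isNilpotent_iff F] at hI ⊢
    obtain ⟨k, hk⟩ := hI
    exact ⟨k, by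
      rw [← LieSubmodule.toSubmodule_inj, coe_lowerCentralSeries_ideal_quot_eq]
      simp [hk]⟩
  have hlcs := (LieModule.isNilpotent_quotient_iff F L L I).mp hmod
  have hmem := aux_A_algebra (Module.finrank F L) L le_rfl hA I hlcs
  rw [LieAlgebra.derivedSeries_def, LieAlgebra.derivedSeriesOfIdeal_succ,
    LieAlgebra.derivedSeriesOfIdeal_zero, LieSubmodule.lie_le_iff]
  intro y _ z _
  exact hmem y z
end

section
/- Let L be a finite-dimensional monolithic solvable Lie A-algebra over a field F with monolith W, of derived length n+1 (so L^(n+1) = 0 and L^(n) ≠ 0), and let N be the nilradical of L (a nilpotent ideal containing every nilpotent ideal). Then N = L^(n), and N equals the centralizer of W in L: N = {x ∈ L : [x, w] = 0 for all w ∈ W}. -/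
open LinearMap

section PureEnd
variable {F V : Type*} [Field F] [AddCommGroup V] [Module F V]

open Classical in
/-- Projection onto `ker f` along `range f`, when they are complementary; else `1`. -/
noncomputable def purProj (f : Module.End F V) : Module.End F V :=
  if h : IsCompl (ker f) (range f) then
    (ker f).subtype ∘ₗ Submodule.projectionOnto _ _ h else 1

variable {f g : Module.End F V}

theorem purProj_apply_ker (h : IsCompl (ker f) (range f)) {v : V} (hv : f v = 0) :
    purProj f v = v := by
  rw [purProj]; rw [dif_pos h]
  simpa using congrArg Subtype.val
    (Submodule.projectionOnto_apply_left h ⟨v, (mem_ker (f := f)).2 hv⟩)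

theorem purProj_apply_range (h : IsCompl (ker f) (range f)) {v : V} (hv : v ∈ range f) :
    purProj f v = 0 := by
  rw [purProj]; rw [dif_pos h]
  simp [Submodule.projectionOnto_apply_of_mem_right h hv]

theorem purProj_mem_ker (h : IsCompl (ker f) (range f)) (v : V) : f (purProj f v) = 0 := by
  rw [purProj]; rw [dif_pos h]
  exact (Submodule.projectionOnto _ _ h v).2

theorem f_mul_purProj (h : IsCompl (ker f) (range f)) : f * purProj f = 0 := by
  ext v; exact purProj_mem_ker h v

theorem sub_purProj_mem_range (h : IsCompl (ker f) (range f)) (v : V) :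
    v - purProj f v ∈ range f := by
  obtain ⟨y, z, hy, hz, rfl⟩ := Submodule.codisjoint_iff_exists_add_eq.mp h.codisjoint v
  have h1 : purProj f (y + z) = y := by
    rw [map_add, purProj_apply_ker h (mem_ker.1 hy), purProj_apply_range h hz, add_zero]
  rw [h1]; simpa using hz

theorem commute_purProj (hc : Commute g f) (h : IsCompl (ker f) (range f)) :
    Commute g (purProj f) := by
  have hgf : ∀ v, g (f v) = f (g v) := fun v => congrFun (congrArg DFunLike.coe hc.eq) v
  ext v
  obtain ⟨y, z, hy, hz, rfl⟩ := Submodule.codisjoint_iff_exists_add_eq.mp h.codisjoint v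
  have hy' : f y = 0 := mem_ker.1 hy
  obtain ⟨u, rfl⟩ := hz
  have h1 : purProj f (y + f u) = y := by
    rw [map_add, purProj_apply_ker h hy', purProj_apply_range h (mem_range_self f u), add_zero]
  have h2 : purProj f (g (y + f u)) = g y := by
    have he : g (y + f u) = g y + f (g u) := by rw [map_add, hgf]
    rw [he, map_add, purProj_apply_ker h (show f (g y) = 0 by rw [← hgf, hy', map_zero]),
      purProj_apply_range h (mem_range_self f (g u)), add_zero]
  simp only [Module.End.mul_apply, h1, h2]

theorem purProj_mul_f (h : IsCompl (ker f) (range f)) : purProj f * f = 0 := by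
  ext v; exact purProj_apply_range h (mem_range_self f v)

end PureEnd

section ProdProj
variable {F V : Type*} [Field F] [AddCommGroup V] [Module F V]

theorem commute_prod_purProj {l : List (Module.End F V)} {g : Module.End F V}
    (hp : ∀ f ∈ l, IsCompl (ker f) (range f)) (hc : ∀ f ∈ l, Commute g f) :
    Commute g (l.map purProj).prod := by
  induction l with
  | nil => simpa using Commute.one_right g
  | cons a t ih =>
    simp only [List.map_cons, List.prod_cons]
    exact (commute_purProj (hc a (by simp)) (hp a (by simp))).mul_right
      (ih (fun f hf => hp f (by simp [hf])) (fun f hf => hc f (by simp [hf])))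

theorem prod_purProj_apply_of_ker {l : List (Module.End F V)}
    (hp : ∀ f ∈ l, IsCompl (ker f) (range f)) {v : V} (hv : ∀ f ∈ l, f v = 0) :
    (l.map purProj).prod v = v := by
  induction l with
  | nil => simp
  | cons a t ih =>
    simp only [List.map_cons, List.prod_cons, Module.End.mul_apply]
    rw [ih (fun f hf => hp f (by simp [hf])) (fun f hf => hv f (by simp [hf])),
      purProj_apply_ker (hp a (by simp)) (hv a (by simp))]

theorem f_mul_prod_purProj {l : List (Module.End F V)}
    (hp : ∀ f ∈ l, IsCompl (ker f) (range f))
    (hc : ∀ f ∈ l, ∀ g ∈ l, Commute f g) {f : Module.End F V} (hf : f ∈ l) :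
    f * (l.map purProj).prod = 0 := by
  induction l with
  | nil => simp at hf
  | cons a t ih =>
    simp only [List.map_cons, List.prod_cons]
    rcases List.mem_cons.1 hf with rfl | hf'
    · rw [← mul_assoc, f_mul_purProj (hp f (by simp)), zero_mul]
    · have hcomm : Commute f (purProj a) :=
        commute_purProj (hc f (by simp [hf']) a (by simp)) (hp a (by simp))
      rw [← mul_assoc, hcomm.eq, mul_assoc,
        ih (fun f hf => hp f (by simp [hf])) (fun f hf g hg => hc f (by simp [hf]) g (by simp [hg]))
          hf', mul_zero]

theorem prod_purProj_mul_f {l : List (Module.End F V)}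
    (hp : ∀ f ∈ l, IsCompl (ker f) (range f))
    (hc : ∀ f ∈ l, ∀ g ∈ l, Commute f g) {f : Module.End F V} (hf : f ∈ l) :
    (l.map purProj).prod * f = 0 := by
  have h := commute_prod_purProj hp (fun g hg => hc f hf g hg)
  rw [← h.eq, f_mul_prod_purProj hp hc hf]

theorem sub_prod_purProj_mem {l : List (Module.End F V)}
    (hp : ∀ f ∈ l, IsCompl (ker f) (range f)) (v : V) :
    v - (l.map purProj).prod v ∈ l.foldr (fun f S => LinearMap.range f ⊔ S) ⊥ := by
  induction l generalizing v with
  | nil => simp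
  | cons a t ih =>
    simp only [List.map_cons, List.prod_cons, Module.End.mul_apply, List.foldr_cons]
    have h1 := ih (fun f hf => hp f (by simp [hf])) v
    have h2 := sub_purProj_mem_range (hp a (by simp)) ((t.map purProj).prod v)
    have : v - purProj a ((t.map purProj).prod v)
        = (v - (t.map purProj).prod v) + ((t.map purProj).prod v - purProj a ((t.map purProj).prod v)) := by abel
    rw [this]
    exact Submodule.add_mem _ (Submodule.mem_sup_right h1) (Submodule.mem_sup_left h2)
end ProdProj


set_option linter.unusedSectionVars false



section Main
open Module
variable {F L : Type*} [Field F] [LieRing L] [LieAlgebra F L] [FiniteDimensional F L]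

variable {F L : Type*} [Field F] [LieRing L] [LieAlgebra F L] [FiniteDimensional F L]

theorem toEnd_pure (hA : IsAAlgebra F L) (N : LieIdeal F L)
    (hab : ∀ a ∈ N, ∀ b ∈ N, ⁅a, b⁆ = (0 : L)) (x : L) :
    IsCompl (ker (LieModule.toEnd F L ↥N x)) (range (LieModule.toEnd F L ↥N x)) := by
  set g := LieModule.toEnd F L ↥N x with hgdef
  have hgcoe : ∀ v : ↥N, ((g v : ↥N) : L) = ⁅x, (v : L)⁆ := fun v => by
    rw [hgdef, LieModule.toEnd_apply_apply, LieSubmodule.coe_bracket]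
  set m := Module.finrank F ↥N with hm
  -- the submodules S k = coe of g^k (ker g^m)
  set S : ℕ → Submodule F L :=
    fun k => ((LinearMap.ker (g ^ m)).map (g ^ k)).map (N : Submodule F L).subtype with hS
  have memS : ∀ {k : ℕ} {v : L},
      v ∈ S k ↔ ∃ w : ↥N, (g ^ m) w = 0 ∧ (((g ^ k) w : ↥N) : L) = v := by
    intro k v
    simp only [hS, Submodule.mem_map, LinearMap.mem_ker]
    constructor
    · rintro ⟨u, ⟨w, hw, rfl⟩, rfl⟩; exact ⟨w, hw, rfl⟩
    · rintro ⟨w, hw, rfl⟩; exact ⟨(g ^ k) w, ⟨w, hw, rfl⟩, rfl⟩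
  have hSN : ∀ {k : ℕ} {v : L}, v ∈ S k → v ∈ N := by
    rintro k v hv
    obtain ⟨w, _, rfl⟩ := memS.1 hv
    exact ((g ^ k) w).2
  have hSsucc : ∀ {k : ℕ} {v : L}, v ∈ S k → ⁅x, v⁆ ∈ S (k + 1) := by
    rintro k v hv
    obtain ⟨w, hw, rfl⟩ := memS.1 hv
    refine memS.2 ⟨w, hw, ?_⟩
    rw [pow_succ' g k, Module.End.mul_apply, hgcoe]
  have hStop : ∀ {v : L}, v ∈ S m → v = 0 := by
    rintro v hv
    obtain ⟨w, hw, rfl⟩ := memS.1 hv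
    rw [hw]; rfl
  -- N₀ = S 0
  have memS0 : ∀ {v : L}, v ∈ N → (∃ hv : v ∈ N, (g ^ m) ⟨v, hv⟩ = 0) → v ∈ S 0 := by
    rintro v hv ⟨hv', h0⟩
    exact memS.2 ⟨⟨v, hv'⟩, h0, rfl⟩
  have hS10 : S 1 ≤ S 0 := by
    rintro v hv
    obtain ⟨w, hw, rfl⟩ := memS.1 hv
    refine memS.2 ⟨g w, ?_, ?_⟩
    · rw [← Module.End.mul_apply, ← pow_succ, pow_succ', Module.End.mul_apply, hw, map_zero]
    · simp [pow_zero, pow_one]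
  -- the subalgebra U = F x ⊔ S 0
  have hUlie : ∀ {a b : L}, a ∈ (F ∙ x) ⊔ S 0 → b ∈ (F ∙ x) ⊔ S 0 →
      ⁅a, b⁆ ∈ (F ∙ x) ⊔ S 0 := by
    rintro a b ha hb
    obtain ⟨y, hy, v, hv, rfl⟩ := Submodule.mem_sup.1 ha
    obtain ⟨z, hz, w, hw, rfl⟩ := Submodule.mem_sup.1 hb
    obtain ⟨c, rfl⟩ := Submodule.mem_span_singleton.1 hy
    obtain ⟨d, rfl⟩ := Submodule.mem_span_singleton.1 hz
    have hvw : ⁅v, w⁆ = 0 := hab v (hSN hv) w (hSN hw)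
    have hexp : ⁅c • x + v, d • x + w⁆ = c • ⁅x, w⁆ - d • ⁅x, v⁆ := by
      have hsk : ⁅v, x⁆ = -⁅x, v⁆ := by rw [← lie_skew]
      simp only [lie_add, add_lie, smul_lie, lie_smul, lie_self, hvw, smul_zero, add_zero,
        zero_add]
      rw [hsk]
      module
    rw [hexp]
    have h1 : c • ⁅x, w⁆ ∈ S 1 := Submodule.smul_mem _ c (hSsucc hw)
    have h2 : d • ⁅x, v⁆ ∈ S 1 := Submodule.smul_mem _ d (hSsucc hv)
    exact Submodule.mem_sup_right (Submodule.sub_mem _ (hS10 h1) (hS10 h2))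
  have hStop2 : ∀ {v : L}, v ∈ S (m + 1) → v = 0 := by
    rintro v hv
    obtain ⟨w, hw, rfl⟩ := memS.1 hv
    rw [pow_succ', Module.End.mul_apply, hw, map_zero]; rfl
  set U : LieSubalgebra F L :=
    { toSubmodule := (F ∙ x) ⊔ S 0
      lie_mem' := fun {a b} ha hb => hUlie ha hb } with hU
  have hxU : x ∈ U := Submodule.mem_sup_left (Submodule.mem_span_singleton_self x)
  have hS0U : ∀ {v : L}, v ∈ S 0 → v ∈ U := fun hv => Submodule.mem_sup_right hv
  have hUnil : LieModule.IsNilpotent ↥U ↥U := by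
    refine (LieAlgebra.isNilpotent_iff_forall (R := F)).2 ?_
    intro u
    refine ⟨m + 1, ?_⟩
    obtain ⟨y, hy, v₀, hv₀, huv⟩ := Submodule.mem_sup.1 u.2
    obtain ⟨c, hc⟩ := Submodule.mem_span_singleton.1 hy
    have hukey : ∀ k : ℕ, ∀ z : L, z ∈ S k → ⁅(u : L), z⁆ ∈ S (k + 1) := by
      intro k z hz
      have h0 : ⁅v₀, z⁆ = 0 := hab v₀ (hSN hv₀) z (hSN hz)
      have he : ⁅(u : L), z⁆ = c • ⁅x, z⁆ := by
        rw [← huv, ← hc, add_lie, smul_lie, h0, add_zero]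
      rw [he]
      exact Submodule.smul_mem _ c (hSsucc hz)
    have hbase : ∀ z : ↥U, ⁅(u : L), (z : L)⁆ ∈ S 1 := by
      intro z
      obtain ⟨y', hy', w, hw, hzw⟩ := Submodule.mem_sup.1 z.2
      obtain ⟨d, hd⟩ := Submodule.mem_span_singleton.1 hy'
      have hux : ⁅(u : L), x⁆ ∈ S 1 := by
        have he : ⁅(u : L), x⁆ = -⁅x, v₀⁆ := by
          rw [← huv, ← hc, add_lie, smul_lie, lie_self, smul_zero, zero_add, ← lie_skew]
        rw [he]
        exact Submodule.neg_mem _ (hSsucc hv₀)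
      have he : ⁅(u : L), (z : L)⁆ = d • ⁅(u : L), x⁆ + ⁅(u : L), w⁆ := by
        rw [← hzw, ← hd, lie_add, lie_smul]
      rw [he]
      exact Submodule.add_mem _ (Submodule.smul_mem _ d hux) (hukey 0 w hw)
    have hiter : ∀ k : ℕ, ∀ z : ↥U, (((LieAlgebra.ad F ↥U u) ^ (k + 1)) z : L) ∈ S (k + 1) := by
      intro k
      induction k with
      | zero =>
        intro z
        rw [pow_one]
        exact hbase z
      | succ k ih =>
        intro z
        have hstep : ((LieAlgebra.ad F ↥U u) ^ (k + 1 + 1)) z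
            = (LieAlgebra.ad F ↥U u) (((LieAlgebra.ad F ↥U u) ^ (k + 1)) z) := by
          rw [pow_succ', Module.End.mul_apply]
        rw [hstep, LieAlgebra.ad_apply, LieSubalgebra.coe_bracket]
        exact hukey (k + 1) _ (ih z)
    refine LinearMap.ext fun z => ?_
    have h := hiter m z
    exact Subtype.ext (by rw [hStop2 h]; rfl)
  have habU : IsLieAbelian ↥U := hA U hUnil
  have hker : ∀ v : ↥N, (g ^ m) v = 0 → g v = 0 := by
    intro v hv
    have hvS0 : (v : L) ∈ S 0 := memS.2 ⟨v, hv, by rw [pow_zero]; rfl⟩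
    have h := habU.trivial ⟨x, hxU⟩ ⟨(v : L), hS0U hvS0⟩
    have h' : ⁅x, (v : L)⁆ = 0 := by
      have := congrArg Subtype.val h
      rwa [LieSubalgebra.coe_bracket] at this
    exact Subtype.ext (by rw [hgcoe]; exact h')
  have hdisj : LinearMap.ker g ⊓ LinearMap.range g = ⊥ := by
    rw [Submodule.eq_bot_iff]
    rintro v ⟨hk, u, rfl⟩
    have h2 : (g ^ 2) u = 0 := by
      rw [pow_two, Module.End.mul_apply]
      exact hk
    have hu : u ∈ LinearMap.ker (g ^ 2) := h2
    have := Module.End.ker_pow_le_ker_pow_finrank g 2 hu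
    exact hker u this
  refine ⟨disjoint_iff.2 hdisj, codisjoint_iff.2 ?_⟩
  apply Submodule.eq_top_of_finrank_eq
  have h1 := Submodule.finrank_sup_add_finrank_inf_eq (LinearMap.ker g) (LinearMap.range g)
  rw [hdisj, finrank_bot] at h1
  have h2 := LinearMap.finrank_range_add_finrank_ker g
  omega

theorem toEnd_commute (N : LieIdeal F L) (hab : ∀ a ∈ N, ∀ b ∈ N, ⁅a, b⁆ = (0 : L))
    {x y : L} (h : ⁅x, y⁆ ∈ N) :
    Commute (LieModule.toEnd F L ↥N x) (LieModule.toEnd F L ↥N y) := by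
  have hz : LieModule.toEnd F L ↥N ⁅x, y⁆ = 0 := by
    ext v
    have h0 : (⁅⁅x, y⁆, (v : L)⁆ : L) = 0 := hab _ h _ v.2
    have h1 : (((LieModule.toEnd F L ↥N ⁅x, y⁆) v : ↥N) : L) = 0 := by
      rw [LieModule.toEnd_apply_apply, LieSubmodule.coe_bracket]; exact h0
    exact h1
  letI : LieRing (Module.End F ↥N) := LieRing.ofAssociativeRing
  have hlie := LieHom.map_lie (LieModule.toEnd F L ↥N) x y
  rw [hz, Ring.lie_def] at hlie
  exact sub_eq_zero.1 hlie.symm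


theorem key_engine (hA : IsAAlgebra F L) (N : LieIdeal F L)
    (hab : ∀ a ∈ N, ∀ b ∈ N, ⁅a, b⁆ = (0 : L)) (xs : List L)
    (hxs : ∀ a ∈ xs, ∀ b ∈ xs, ⁅a, b⁆ ∈ N) :
    ∃ P : Module.End F ↥N,
      (∀ v : ↥N, (∀ a ∈ xs, ⁅a, (v : L)⁆ = 0) → P v = v) ∧
      (∀ a ∈ xs, ∀ v : ↥N, P (LieModule.toEnd F L ↥N a v) = 0) ∧
      (∀ a ∈ xs, ∀ v : ↥N, ⁅a, ((P v : ↥N) : L)⁆ = 0) ∧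
      (∀ v : ↥N, ((v : L) - ((P v : ↥N) : L)) ∈
        Submodule.span F {z : L | ∃ a ∈ xs, ∃ u ∈ N, ⁅a, u⁆ = z}) := by
  have hcoe : ∀ (x : L) (v : ↥N), ((LieModule.toEnd F L ↥N x v : ↥N) : L) = ⁅x, (v : L)⁆ :=
    fun x v => by rw [LieModule.toEnd_apply_apply, LieSubmodule.coe_bracket]
  set f := fun x : L => LieModule.toEnd F L ↥N x with hf
  set l := xs.map f with hl
  have hp : ∀ g ∈ l, IsCompl (LinearMap.ker g) (LinearMap.range g) := by
    rintro g hg; obtain ⟨a, _, rfl⟩ := List.mem_map.1 hg; exact toEnd_pure hA N hab a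
  have hcm : ∀ g ∈ l, ∀ g' ∈ l, Commute g g' := by
    rintro g hg g' hg'
    obtain ⟨a, ha, rfl⟩ := List.mem_map.1 hg
    obtain ⟨b, hb, rfl⟩ := List.mem_map.1 hg'
    exact toEnd_commute N hab (hxs a ha b hb)
  have hfold : ∀ ys : List L, (∀ a ∈ ys, a ∈ xs) → ∀ u : ↥N,
      u ∈ (ys.map f).foldr (fun g S => LinearMap.range g ⊔ S) ⊥ →
      (u : L) ∈ Submodule.span F {z : L | ∃ a ∈ xs, ∃ u ∈ N, ⁅a, u⁆ = z} := by
    intro ys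
    induction ys with
    | nil =>
      intro _ u hu
      simp only [List.map_nil, List.foldr_nil, Submodule.mem_bot] at hu
      rw [hu]; exact Submodule.zero_mem _
    | cons a t ih =>
      intro hsub u hu
      simp only [List.map_cons, List.foldr_cons] at hu
      obtain ⟨y, hy, z, hz, rfl⟩ := Submodule.mem_sup.1 hu
      obtain ⟨w, rfl⟩ := hy
      have h1 : ((f a w : ↥N) : L) ∈ Submodule.span F {z : L | ∃ a ∈ xs, ∃ u ∈ N, ⁅a, u⁆ = z} :=
        Submodule.subset_span ⟨a, hsub a (by simp), (w : L), w.2, (hcoe a w).symm⟩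
      have h2 := ih (fun b hb => hsub b (by simp [hb])) z hz
      rw [Submodule.coe_add]
      exact Submodule.add_mem _ h1 h2
  refine ⟨(l.map purProj).prod, ?_, ?_, ?_, ?_⟩
  · intro v hv
    refine prod_purProj_apply_of_ker hp ?_
    rintro g hg; obtain ⟨a, ha, rfl⟩ := List.mem_map.1 hg
    have : ((f a v : ↥N) : L) = 0 := by rw [hcoe]; exact hv a ha
    exact Subtype.ext this
  · intro a ha v
    have h := prod_purProj_mul_f hp hcm (List.mem_map_of_mem (f := f) ha)
    have h2 := congrFun (congrArg DFunLike.coe h) v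
    simpa [hf] using h2
  · intro a ha v
    have h := f_mul_prod_purProj hp hcm (List.mem_map_of_mem (f := f) ha)
    have h2 := congrFun (congrArg DFunLike.coe h) v
    have h3 : f a ((l.map purProj).prod v) = 0 := by simpa using h2
    rw [← hcoe a]
    rw [h3]; rfl
  · intro v
    have h := sub_prod_purProj_mem hp v
    have h2 := hfold xs (fun a ha => ha) _ h
    rwa [AddSubgroupClass.coe_sub] at h2

end Main

open Module in
theorem monolith_nilradical (F L : Type*) [Field F] [LieRing L] [LieAlgebra F L]
    [FiniteDimensional F L] [LieAlgebra.IsSolvable L] (hA : IsAAlgebra F L)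
    (W : LieIdeal F L) (hWne : W ≠ ⊥)
    (hWmono : ∀ I : LieIdeal F L, I ≠ ⊥ → W ≤ I) (n : ℕ)
    (hlen : LieAlgebra.derivedSeries F L (n + 1) = ⊥ ∧ LieAlgebra.derivedSeries F L n ≠ ⊥)
    (N : LieIdeal F L) (hNnil : LieModule.IsNilpotent N N)
    (hNmax : ∀ I : LieIdeal F L, LieModule.IsNilpotent I I → I ≤ N) :
    N = LieAlgebra.derivedSeries F L n ∧
    ∀ x : L, x ∈ N ↔ ∀ w ∈ W, ⁅x, w⁆ = 0 := by
  classical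
  obtain ⟨hlen1, hlen2⟩ := hlen
  -- abelianness of the bottom of the derived series
  have habD : ∀ a ∈ LieAlgebra.derivedSeries F L n, ∀ b ∈ LieAlgebra.derivedSeries F L n,
      ⁅a, b⁆ = (0 : L) := by
    intro a ha b hb
    have h : ⁅a, b⁆ ∈ LieAlgebra.derivedSeries F L (n + 1) := by
      rw [LieAlgebra.derivedSeries_def, LieAlgebra.derivedSeriesOfIdeal_succ]
      exact LieSubmodule.lie_mem_lie ha hb
    rw [hlen1] at h
    simpa using h
  -- derived bottom is a nilpotent ideal, hence ≤ N
  have hDnil : LieModule.IsNilpotent ↥(LieAlgebra.derivedSeries F L n) ↥(LieAlgebra.derivedSeries F L n) := by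
    haveI : IsLieAbelian ↥(LieAlgebra.derivedSeries F L n) := by
      constructor
      intro a b
      exact Subtype.ext (habD _ a.2 _ b.2)
    infer_instance
  have hDN : LieAlgebra.derivedSeries F L n ≤ N := hNmax _ hDnil
  have hWD : W ≤ LieAlgebra.derivedSeries F L n := hWmono _ hlen2
  have hWN : W ≤ N := le_trans hWD hDN
  -- N is abelian
  have habN : ∀ a ∈ N, ∀ b ∈ N, ⁅a, b⁆ = (0 : L) := by
    have h := hA N hNnil
    intro a ha b hb
    have h2 := h.trivial ⟨a, ha⟩ ⟨b, hb⟩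
    have h3 := congrArg Subtype.val h2
    exact h3
  -- the centralizer of W as a Lie ideal
  set CW : LieIdeal F L :=
    { carrier := {x : L | ∀ w ∈ W, ⁅x, w⁆ = 0}
      add_mem' := by
        intro a b ha hb w hw
        rw [add_lie, ha w hw, hb w hw, add_zero]
      zero_mem' := by intro w hw; rw [zero_lie]
      smul_mem' := by
        intro c a ha w hw
        rw [smul_lie, ha w hw, smul_zero]
      lie_mem := by
        intro x m hm w hw
        have h1 : ⁅⁅x, m⁆, w⁆ = ⁅x, ⁅m, w⁆⁆ - ⁅m, ⁅x, w⁆⁆ := lie_lie x m w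
        rw [hm w hw] at h1
        rw [h1, lie_zero, hm _ (W.lie_mem hw), sub_zero]
        } with hCWdef
  have hmemCW : ∀ x : L, x ∈ CW ↔ ∀ w ∈ W, ⁅x, w⁆ = 0 := fun x => Iff.rfl
  have hNCW : N ≤ CW := by
    intro x hx
    rw [hmemCW]
    intro w hw
    exact habN x hx w (hWN hw)
  -- STEP I : CW ≤ N
  have hCWN : CW ≤ N := by
    by_contra hnot
    have hNltCW : N < CW := lt_of_le_of_ne hNCW (fun h => hnot (le_of_eq h.symm))
    have hPd : ∃ d, ∃ K : LieIdeal F L, (N < K ∧ K ≤ CW) ∧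
        finrank F (K : Submodule F L) = d := ⟨_, CW, ⟨hNltCW, le_refl CW⟩, rfl⟩
    obtain ⟨K, ⟨hNK, hKCW⟩, hKd⟩ := Nat.find_spec hPd
    have hKmin : ∀ J : LieIdeal F L, N < J → J ≤ CW →
        Nat.find hPd ≤ finrank F (J : Submodule F L) :=
      fun J h1 h2 => Nat.find_min' hPd ⟨J, ⟨h1, h2⟩, rfl⟩
    -- derived trick : ⁅K, K⁆ ≤ N
    have hKK : ⁅K, K⁆ ≤ N := by
      by_cases hJ : ⁅K, K⁆ ⊔ N = K
      · exfalso
        have hstep : ∀ m : ℕ, LieAlgebra.derivedSeriesOfIdeal F L m K ⊔ N = K := by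
          intro m
          induction m with
          | zero => rw [LieAlgebra.derivedSeriesOfIdeal_zero]; exact sup_eq_left.2 hNK.le
          | succ m ih =>
            refine le_antisymm (sup_le ?_ hNK.le) ?_
            · exact le_trans (LieAlgebra.derivedSeriesOfIdeal_le_self K (m + 1)) (le_refl K)
            · conv_lhs => rw [← hJ]
              refine sup_le ?_ le_sup_right
              have h2 : ⁅K, K⁆ = ⁅LieAlgebra.derivedSeriesOfIdeal F L m K ⊔ N,
                  LieAlgebra.derivedSeriesOfIdeal F L m K ⊔ N⁆ := by rw [ih]
              rw [h2, LieSubmodule.sup_lie, LieSubmodule.lie_sup, LieSubmodule.lie_sup]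
              refine sup_le (sup_le ?_ ?_) (sup_le ?_ ?_)
              · rw [← LieAlgebra.derivedSeriesOfIdeal_succ]; exact le_sup_left
              · exact le_trans (LieSubmodule.lie_le_right _ _) le_sup_right
              · exact le_trans (LieSubmodule.lie_le_left _ _) le_sup_right
              · exact le_trans (LieSubmodule.lie_le_left _ _) le_sup_right
        obtain ⟨k, hk⟩ := LieAlgebra.IsSolvable.solvable F L
        have hKk : LieAlgebra.derivedSeriesOfIdeal F L k K = ⊥ := by
          have h1 := LieAlgebra.derivedSeriesOfIdeal_mono (le_top : K ≤ ⊤) k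
          rw [← LieAlgebra.derivedSeries_def] at h1
          rw [hk] at h1
          exact le_bot_iff.1 h1
        have := hstep k
        rw [hKk, bot_sup_eq] at this
        exact hNK.ne this
      · have hJle : ⁅K, K⁆ ⊔ N ≤ K := sup_le (LieSubmodule.lie_le_left K K) hNK.le
        have hJlt : ⁅K, K⁆ ⊔ N < K := lt_of_le_of_ne hJle hJ
        by_cases hNJ : N < ⁅K, K⁆ ⊔ N
        · exfalso
          have h1 := hKmin _ hNJ (le_trans hJle hKCW)
          have h2 : ((⁅K, K⁆ ⊔ N : LieIdeal F L) : Submodule F L) < (K : Submodule F L) := by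
            refine lt_of_le_of_ne ((LieSubmodule.toSubmodule_le_toSubmodule _ _).2 hJle) ?_
            intro h
            exact hJ (LieSubmodule.toSubmodule_injective h)
          have h3 := Submodule.finrank_lt_finrank_of_lt h2
          omega
        · have : ⁅K, K⁆ ⊔ N = N := le_antisymm (by
            rcases lt_or_eq_of_le (le_sup_right : N ≤ ⁅K, K⁆ ⊔ N) with h | h
            · exact absurd h hNJ
            · exact le_of_eq h.symm) le_sup_right
          calc ⁅K, K⁆ ≤ ⁅K, K⁆ ⊔ N := le_sup_left
            _ = N := this
    -- ⁅K, N⁆ is a nonzero ideal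
    have hKNne : ⁅K, N⁆ ≠ ⊥ := by
      intro hKN
      have hnilK : LieModule.IsNilpotent ↥K ↥K := by
        refine (LieAlgebra.isNilpotent_iff_forall (R := F)).2 ?_
        intro u
        refine ⟨2, ?_⟩
        ext z
        have h1 : ⁅(u : L), (z : L)⁆ ∈ N := hKK (LieSubmodule.lie_mem_lie u.2 z.2)
        have h2 : ⁅(u : L), ⁅(u : L), (z : L)⁆⁆ ∈ (⊥ : LieIdeal F L) := by
          rw [← hKN]; exact LieSubmodule.lie_mem_lie u.2 h1
        have h3 : ⁅(u : L), ⁅(u : L), (z : L)⁆⁆ = 0 := by simpa using h2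
        have h4 : (((LieAlgebra.ad F ↥K u ^ 2) z : ↥K) : L)
            = ⁅(u : L), ⁅(u : L), (z : L)⁆⁆ := by
          rw [pow_two, Module.End.mul_apply, LieAlgebra.ad_apply, LieAlgebra.ad_apply]
          rfl
        exact h4.trans h3
      exact hNK.not_ge (hNmax K hnilK)
    have hWKN : W ≤ ⁅K, N⁆ := hWmono _ hKNne
    obtain ⟨w, hwW, hwne⟩ : ∃ w, w ∈ W ∧ w ≠ (0 : L) := by
      by_contra h
      push_neg at h
      exact hWne ((LieSubmodule.eq_bot_iff _).2 fun m hm => h m hm)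
    have hwKN : w ∈ Submodule.span F {m : L | ∃ x ∈ K, ∃ v ∈ N, ⁅x, v⁆ = m} := by
      rw [← LieSubmodule.lieIdeal_oper_eq_linear_span']
      exact (LieSubmodule.mem_toSubmodule _).2 (hWKN hwW)
    obtain ⟨k, c, gfun, hsum⟩ := Submodule.mem_span_set'.1 hwKN
    have hg : ∀ i : Fin k, ∃ x ∈ K, ∃ v ∈ N, ⁅x, v⁆ = ((gfun i : L)) := fun i => (gfun i).2
    choose xk hxkK vk hvkN hbr using hg
    set xs : List L := List.ofFn xk with hxsdef
    have hxsK : ∀ a ∈ xs, a ∈ K := by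
      intro a ha
      obtain ⟨i, rfl⟩ := List.mem_ofFn.1 ha
      exact hxkK i
    have hxsN : ∀ a ∈ xs, ∀ b ∈ xs, ⁅a, b⁆ ∈ N := fun a ha b hb =>
      hKK (LieSubmodule.lie_mem_lie (hxsK a ha) (hxsK b hb))
    obtain ⟨P, hP1, hP2, _, _⟩ := key_engine hA N habN xs hxsN
    have hwN : w ∈ N := hWN hwW
    have hterm : ∀ i : Fin k,
        ((LieModule.toEnd F L ↥N (xk i) ⟨c i • vk i, N.smul_mem (c i) (hvkN i)⟩ : ↥N) : L)
        = c i • (gfun i : L) := by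
      intro i
      rw [LieModule.toEnd_apply_apply, LieSubmodule.coe_bracket]
      show ⁅xk i, c i • vk i⁆ = c i • (gfun i : L)
      rw [lie_smul, hbr i]
    have hsum' : (⟨w, hwN⟩ : ↥N)
        = ∑ i : Fin k, LieModule.toEnd F L ↥N (xk i) ⟨c i • vk i, N.smul_mem (c i) (hvkN i)⟩ := by
      apply Subtype.ext
      rw [AddSubmonoidClass.coe_finset_sum]
      rw [show ((⟨w, hwN⟩ : ↥N) : L) = w from rfl, ← hsum]
      exact Finset.sum_congr rfl fun i _ => (hterm i).symm
    have hPw : P ⟨w, hwN⟩ = ⟨w, hwN⟩ :=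
      hP1 _ (fun a ha => (hmemCW a).1 (hKCW (hxsK a ha)) w hwW)
    have hPw0 : P ⟨w, hwN⟩ = 0 := by
      rw [hsum', map_sum]
      refine Finset.sum_eq_zero ?_
      intro i _
      exact hP2 (xk i) (List.mem_ofFn.2 ⟨i, rfl⟩) _
    rw [hPw] at hPw0
    exact hwne (by simpa using congrArg Subtype.val hPw0)
  have hiff : ∀ x : L, x ∈ N ↔ ∀ w ∈ W, ⁅x, w⁆ = 0 := by
    intro x
    constructor
    · intro hx w hw; exact habN x hx w (hWN hw)
    · intro hx; exact hCWN ((hmemCW x).2 hx)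
  refine ⟨?_, hiff⟩
  cases n with
  | zero =>
    have habL : ∀ x y : L, ⁅x, y⁆ = (0 : L) := by
      intro x y
      have h : ⁅x, y⁆ ∈ LieAlgebra.derivedSeries F L 1 := by
        rw [LieAlgebra.derivedSeries_def, LieAlgebra.derivedSeriesOfIdeal_succ]
        refine LieSubmodule.lie_mem_lie ?_ ?_ <;>
          · rw [LieAlgebra.derivedSeriesOfIdeal_zero]; exact LieSubmodule.mem_top _
      rw [hlen1] at h
      simpa using h
    have hnilT : LieModule.IsNilpotent ↥(⊤ : LieIdeal F L) ↥(⊤ : LieIdeal F L) := by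
      haveI : IsLieAbelian ↥(⊤ : LieIdeal F L) := by
        constructor
        intro a b
        exact Subtype.ext (habL a b)
      infer_instance
    have hNtop : N = ⊤ := le_antisymm le_top (hNmax ⊤ hnilT)
    rw [hNtop, LieAlgebra.derivedSeries_def, LieAlgebra.derivedSeriesOfIdeal_zero]
  | succ n' =>
    set A' := LieAlgebra.derivedSeries F L n' with hA'def
    have hDsucc : ⁅A', A'⁆ = LieAlgebra.derivedSeries F L (n' + 1) := by
      rw [hA'def, LieAlgebra.derivedSeries_def, LieAlgebra.derivedSeries_def,
        LieAlgebra.derivedSeriesOfIdeal_succ]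
    set M : LieIdeal F L := N ⊔ A' with hMdef
    have hMM : ⁅M, M⁆ ≤ N := by
      rw [hMdef, LieSubmodule.sup_lie, LieSubmodule.lie_sup, LieSubmodule.lie_sup]
      refine sup_le (sup_le ?_ ?_) (sup_le ?_ ?_)
      · exact LieSubmodule.lie_le_left N N
      · exact LieSubmodule.lie_le_left N A'
      · exact LieSubmodule.lie_le_right N A'
      · rw [hDsucc]; exact hDN
    obtain ⟨S, hSspan⟩ := IsNoetherian.noetherian (M : Submodule F L)
    set xs : List L := S.toList with hxsdef
    have hxsM : ∀ a ∈ xs, a ∈ M := by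
      intro a ha
      have h1 : a ∈ (↑S : Set L) := by
        rw [hxsdef] at ha
        simpa using ha
      have h2 : a ∈ Submodule.span F (↑S : Set L) := Submodule.subset_span h1
      rw [hSspan] at h2
      exact (LieSubmodule.mem_toSubmodule _).1 h2
    have hxsN : ∀ a ∈ xs, ∀ b ∈ xs, ⁅a, b⁆ ∈ N := fun a ha b hb =>
      hMM (LieSubmodule.lie_mem_lie (hxsM a ha) (hxsM b hb))
    obtain ⟨P, hP1, hP2, hP3, hP4⟩ := key_engine hA N habN xs hxsN
    have hcentral : ∀ cL : L, (∀ a ∈ xs, ⁅a, cL⁆ = 0) → ∀ m ∈ M, ⁅m, cL⁆ = 0 := by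
      intro cL hc m hm
      have hm' : m ∈ Submodule.span F (↑S : Set L) := by
        rw [hSspan]
        exact (LieSubmodule.mem_toSubmodule _).2 hm
      refine Submodule.span_induction (p := fun x _ => ⁅x, cL⁆ = 0) ?_ ?_ ?_ ?_ hm'
      · intro x hx
        show ⁅x, cL⁆ = 0
        exact hc x (by rw [hxsdef]; simpa using hx)
      · exact zero_lie cL
      · intro x y _ _ hx hy
        show ⁅x + y, cL⁆ = 0
        rw [add_lie, show ⁅x, cL⁆ = 0 from hx, show ⁅y, cL⁆ = 0 from hy, add_zero]
      · intro c x _ hx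
        show ⁅c • x, cL⁆ = 0
        rw [smul_lie, show ⁅x, cL⁆ = 0 from hx, smul_zero]
    -- the centralizer of M in N, as an ideal
    set Cc : LieIdeal F L :=
      { carrier := {v : L | v ∈ N ∧ ∀ m ∈ M, ⁅m, v⁆ = 0}
        add_mem' := by
          rintro a b ⟨haN, ha⟩ ⟨hbN, hb⟩
          refine ⟨N.add_mem haN hbN, ?_⟩
          intro m hm
          rw [lie_add, ha m hm, hb m hm, add_zero]
        zero_mem' := ⟨N.zero_mem, fun m _ => lie_zero m⟩
        smul_mem' := by
          rintro c a ⟨haN, ha⟩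
          refine ⟨N.smul_mem c haN, ?_⟩
          intro m hm
          rw [lie_smul, ha m hm, smul_zero]
        lie_mem := by
          rintro x v ⟨hvN, hv⟩
          refine ⟨N.lie_mem hvN, ?_⟩
          intro m hm
          have h1 : ⁅m, ⁅x, v⁆⁆ = ⁅⁅m, x⁆, v⁆ + ⁅x, ⁅m, v⁆⁆ := leibniz_lie m x v
          have h2 : ⁅m, x⁆ ∈ M := by
            have h3 : ⁅x, m⁆ ∈ M := M.lie_mem hm
            have h4 : ⁅m, x⁆ = -⁅x, m⁆ := by rw [← lie_skew]
            rw [h4]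
            exact M.neg_mem h3
          rw [h1, hv _ h2, hv m hm, lie_zero, add_zero]
          } with hCcdef
    by_cases hCc : Cc = ⊥
    · -- N ≤ ⁅M, N⁆ and conclude
      have hNle : ∀ v, (hv : v ∈ N) → v ∈ ((⁅M, N⁆ : LieIdeal F L) : Submodule F L) := by
        intro v hv
        have hPvCc : ((P ⟨v, hv⟩ : ↥N) : L) ∈ Cc := by
          refine ⟨(P ⟨v, hv⟩).2, ?_⟩
          exact hcentral _ (fun a ha => hP3 a ha ⟨v, hv⟩)
        rw [hCc] at hPvCc
        have hPv0 : ((P ⟨v, hv⟩ : ↥N) : L) = 0 := by simpa using hPvCc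
        have h4 := hP4 ⟨v, hv⟩
        rw [hPv0, sub_zero] at h4
        have h5 : Submodule.span F {z : L | ∃ a ∈ xs, ∃ u ∈ N, ⁅a, u⁆ = z}
            ≤ ((⁅M, N⁆ : LieIdeal F L) : Submodule F L) := by
          rw [Submodule.span_le]
          rintro z ⟨a, haxs, u, huN, rfl⟩
          exact (LieSubmodule.mem_toSubmodule _).2
            (LieSubmodule.lie_mem_lie (hxsM a haxs) huN)
        exact h5 h4
      have hNMN : N ≤ ⁅M, N⁆ := fun v hv => (LieSubmodule.mem_toSubmodule _).1 (hNle v hv)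
      have hNNbot : ⁅N, N⁆ ≤ (⊥ : LieIdeal F L) := by
        rw [LieSubmodule.lie_le_iff]
        intro x hx m hm
        rw [LieSubmodule.mem_bot]
        exact habN x hx m hm
      have h1 : ⁅M, N⁆ ≤ ⁅A', N⁆ := by
        rw [hMdef, LieSubmodule.sup_lie]
        exact sup_le (le_trans hNNbot bot_le) (le_refl _)
      have hNA' : N ≤ A' := le_trans hNMN (le_trans h1 (LieSubmodule.lie_le_left A' N))
      have h2 : ⁅A', N⁆ ≤ ⁅A', A'⁆ := LieSubmodule.mono_lie_right A' hNA'
      exact le_antisymm (le_trans hNMN (le_trans h1 (le_trans h2 (le_of_eq hDsucc)))) hDN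
    · exfalso
      have hWCc : W ≤ Cc := hWmono _ hCc
      have hMN : ∀ m ∈ M, m ∈ N := by
        intro m hm
        refine hCWN ((hmemCW m).2 ?_)
        intro w hw
        exact (hWCc hw).2 m hm
      have hA'N : ∀ a ∈ A', a ∈ N := fun a ha => hMN a (le_sup_right (α := LieIdeal F L) ha)
      have hbot : LieAlgebra.derivedSeries F L (n' + 1) = ⊥ := by
        rw [← hDsucc]
        refine le_bot_iff.1 ?_
        rw [LieSubmodule.lie_le_iff]
        intro x hx m hm
        rw [LieSubmodule.mem_bot]
        exact habN x (hA'N x hx) m (hA'N m hm)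
      exact hlen2 hbot
end
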